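/- Let p be a prime with p > 3 and let H₁ and H₂ be subgroups of GL₂(ℤ/p²ℤ) that are locally conjugate in GL₂(ℤ/p²ℤ). If, for each i = 1, 2, every element of GL₂(ℤ/pℤ) of determinant 1 lies in φ(Hᵢ), then H₁ = H₂. -/

import Mathlib

open Matrix

/-- `GL₂(ℤ/nℤ)`. -/
abbrev GL2 (n : ℕ) : Type := GL (Fin 2) (ZMod n)

/-- Reduction modulo `p` from `ℤ/p²ℤ` to `ℤ/pℤ`. -/
def red (p : ℕ) : ZMod (p^2) →+* ZMod p :=
  ZMod.castHom (dvd_pow_self p (by norm_num)) (ZMod p)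

/-- The natural homomorphism `φ : GL₂(ℤ/p²ℤ) →* GL₂(ℤ/pℤ)` given by entrywise
reduction modulo `p`. -/
def phi (p : ℕ) : GL2 (p^2) →* GL2 p :=
  Matrix.GeneralLinearGroup.map (red p)

/-- The element `1 + p • A` of `GL₂(ℤ/p²ℤ)` (its inverse is `1 - p • A`). -/
def kerUnit {p : ℕ} (A : Matrix (Fin 2) (Fin 2) (ZMod (p^2))) : GL2 (p^2) where
  val := 1 + (p : ZMod (p^2)) • A
  inv := 1 - (p : ZMod (p^2)) • A
  val_inv := by
    have h : ((p : ZMod (p^2)) • A) * ((p : ZMod (p^2)) • A) = 0 := by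
      rw [smul_mul_assoc, mul_smul_comm, smul_smul, ← Nat.cast_mul, ← pow_two,
        ZMod.natCast_self, zero_smul]
    rw [add_mul, one_mul, mul_sub, mul_one, h, sub_zero]
    abel
  inv_val := by
    have h : ((p : ZMod (p^2)) • A) * ((p : ZMod (p^2)) • A) = 0 := by
      rw [smul_mul_assoc, mul_smul_comm, smul_smul, ← Nat.cast_mul, ← pow_two,
        ZMod.natCast_self, zero_smul]
    rw [sub_mul, one_mul, mul_add, mul_one, h, add_zero]
    abel

/-- The antidiagonal swap matrix `!![0,1;1,0]` as an element of `GL₂(ℤ/p²ℤ)`. -/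
def swapGL (p : ℕ) : GL2 (p^2) where
  val := !![0, 1; 1, 0]
  inv := !![0, 1; 1, 0]
  val_inv := by
    ext i j
    fin_cases i <;> fin_cases j <;>
      simp [Matrix.mul_apply, Fin.sum_univ_succ, Matrix.one_apply]
  inv_val := by
    ext i j
    fin_cases i <;> fin_cases j <;>
      simp [Matrix.mul_apply, Fin.sum_univ_succ, Matrix.one_apply]

/-- Subgroups `H₁` and `H₂` of a group `G` are locally conjugate in `G` if there is a
bijection `f : H₁ → H₂` such that `h` and `f h` are conjugate in `G` for every `h ∈ H₁`. -/
def IsLocallyConjugate {G : Type*} [Group G] (H₁ H₂ : Subgroup G) : Prop :=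
  ∃ f : H₁ ≃ H₂, ∀ h : H₁, IsConj (h : G) ((f h : G))

/-- Subgroups `H₁` and `H₂` of `G` are conjugate in `G`: `g H₁ g⁻¹ = H₂` for some `g`. -/
def IsConjugateSubgroup {G : Type*} [Group G] (H₁ H₂ : Subgroup G) : Prop :=
  ∃ g : G, Subgroup.map (MulAut.conj g).toMonoidHom H₁ = H₂

/-- Nontrivially locally conjugate: locally conjugate but not conjugate. -/
def IsNontriviallyLocallyConjugate {G : Type*} [Group G] (H₁ H₂ : Subgroup G) : Prop :=
  IsLocallyConjugate H₁ H₂ ∧ ¬ IsConjugateSubgroup H₁ H₂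

section A
variable {p : ℕ} [Fact p.Prime]

omit [Fact p.Prime] in
lemma pp_zero : (p : ZMod (p^2)) * (p : ZMod (p^2)) = 0 := by
  rw [← Nat.cast_mul, ← pow_two, ZMod.natCast_self]

lemma red_natCast (n : ℕ) : red p (n : ZMod (p^2)) = (n : ZMod p) := map_natCast _ n

instance pq_neZero : NeZero (p^2) := ⟨pow_ne_zero 2 (Fact.out : p.Prime).ne_zero⟩

lemma red_eq_val_cast (x : ZMod (p^2)) : red p x = ((x.val : ℕ) : ZMod p) := by
  rw [red, ZMod.castHom_apply, ← ZMod.natCast_val]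

lemma red_eq_zero_iff (x : ZMod (p^2)) : red p x = 0 ↔ ∃ y, x = (p : ZMod (p^2)) * y := by
  constructor
  · intro h
    rw [red_eq_val_cast, ZMod.natCast_eq_zero_iff] at h
    obtain ⟨m, hm⟩ := h
    exact ⟨(m : ZMod (p^2)), by rw [← Nat.cast_mul, ← hm, ZMod.natCast_zmod_val]⟩
  · rintro ⟨y, rfl⟩
    rw [_root_.map_mul, red_natCast, ZMod.natCast_self, zero_mul]

lemma pmul_eq_zero_iff (x : ZMod (p^2)) : (p : ZMod (p^2)) * x = 0 ↔ red p x = 0 := by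
  have hp : p ≠ 0 := (Fact.out : p.Prime).ne_zero
  constructor
  · intro h
    have h2 : ((p * x.val : ℕ) : ZMod (p^2)) = 0 := by
      rw [Nat.cast_mul, ZMod.natCast_zmod_val]; exact h
    rw [ZMod.natCast_eq_zero_iff] at h2
    have h3 : p * p ∣ p * x.val := by rw [← pow_two]; exact h2
    exact (red_eq_val_cast x).trans
      ((ZMod.natCast_eq_zero_iff x.val p).mpr ((mul_dvd_mul_iff_left hp).mp h3))
  · intro h
    obtain ⟨y, rfl⟩ := (red_eq_zero_iff x).mp h
    rw [← mul_assoc, pp_zero, zero_mul]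

lemma pmul_congr {x y : ZMod (p^2)} (h : red p x = red p y) :
    (p : ZMod (p^2)) * x = (p : ZMod (p^2)) * y := by
  have : red p (x - y) = 0 := by rw [map_sub, h, sub_self]
  have h2 : (p : ZMod (p^2)) * (x - y) = 0 := (pmul_eq_zero_iff _).mpr this
  linear_combination h2

end A
section B
variable {p : ℕ} [Fact p.Prime]

local notation "Mat2" => Matrix (Fin 2) (Fin 2) (ZMod (p^2))

lemma smul_mul_smul_zero (A B : Matrix (Fin 2) (Fin 2) (ZMod (p^2))) :
    ((p : ZMod (p^2)) • A) * ((p : ZMod (p^2)) • B) = 0 := by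
  rw [smul_mul_assoc, mul_smul_comm, smul_smul, pp_zero, zero_smul]

lemma kerUnit_val (A : Matrix (Fin 2) (Fin 2) (ZMod (p^2))) :
    (kerUnit A).val = 1 + (p : ZMod (p^2)) • A := rfl

lemma kerUnit_ext {A B : Matrix (Fin 2) (Fin 2) (ZMod (p^2))}
    (h : (p : ZMod (p^2)) • A = (p : ZMod (p^2)) • B) : kerUnit A = kerUnit B :=
  Units.ext (by rw [kerUnit_val, kerUnit_val, h])

lemma kerUnit_mul (A B : Matrix (Fin 2) (Fin 2) (ZMod (p^2))) :
    kerUnit A * kerUnit B = kerUnit (A + B) := by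
  apply Units.ext
  show (kerUnit A).val * (kerUnit B).val = _
  rw [kerUnit_val, kerUnit_val, kerUnit_val, add_mul, one_mul, mul_add, mul_one,
    smul_mul_smul_zero, smul_add]
  abel

lemma kerUnit_zero : kerUnit (0 : Matrix (Fin 2) (Fin 2) (ZMod (p^2))) = 1 :=
  Units.ext (by rw [kerUnit_val, smul_zero, add_zero]; rfl)

lemma kerUnit_pow (A : Matrix (Fin 2) (Fin 2) (ZMod (p^2))) (n : ℕ) :
    (kerUnit A) ^ n = kerUnit (((n : ZMod (p^2))) • A) := by
  induction n with
  | zero => simp [kerUnit_zero]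
  | succ n ih =>
      have hc : ((n+1 : ℕ) : ZMod (p^2)) • A = ((n : ℕ) : ZMod (p^2)) • A + A := by
        push_cast; rw [add_smul, one_smul]
      rw [hc, ← kerUnit_mul, ← ih]
      exact pow_succ _ _

lemma kerUnit_smul_mem {H : Subgroup (GL2 (p^2))} {A : Matrix (Fin 2) (Fin 2) (ZMod (p^2))}
    (hA : kerUnit A ∈ H) (c : ZMod (p^2)) : kerUnit (c • A) ∈ H := by
  have : kerUnit (c • A) = (kerUnit A) ^ (c.val) := by
    rw [kerUnit_pow, ZMod.natCast_zmod_val]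
  rw [this]; exact pow_mem hA _

lemma kerUnit_central (c : ZMod (p^2)) (g : GL2 (p^2)) :
    g * kerUnit (c • (1 : Matrix (Fin 2) (Fin 2) (ZMod (p^2)))) =
      kerUnit (c • (1 : Matrix (Fin 2) (Fin 2) (ZMod (p^2)))) * g := by
  apply Units.ext
  show g.val * (kerUnit _).val = (kerUnit _).val * g.val
  rw [kerUnit_val, mul_add, add_mul, mul_one, one_mul, mul_smul_comm, smul_mul_assoc,
    mul_smul_comm, smul_mul_assoc, mul_one, one_mul]

lemma phi_val (g : GL2 (p^2)) : (phi p g).val = g.val.map (red p) := rfl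

lemma phi_kerUnit (A : Matrix (Fin 2) (Fin 2) (ZMod (p^2))) : phi p (kerUnit A) = 1 := by
  apply Units.ext
  rw [phi_val, kerUnit_val, Units.val_one]
  ext i j
  simp only [Matrix.map_apply, Matrix.add_apply, Matrix.smul_apply, smul_eq_mul, map_add,
    _root_.map_mul, red_natCast, ZMod.natCast_self, zero_mul, add_zero]
  rcases eq_or_ne i j with rfl | hij
  · simp [Matrix.one_apply]
  · simp [Matrix.one_apply, hij]

lemma eq_kerUnit_of_phi_eq_one {k : GL2 (p^2)} (h : phi p k = 1) :
    ∃ A : Matrix (Fin 2) (Fin 2) (ZMod (p^2)), k = kerUnit A := by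
  have hval : k.val.map (red p) = 1 := by rw [← phi_val, h]; rfl
  have hred : ∀ i j, red p ((k.val - 1) i j) = 0 := by
    intro i j
    have := congrArg (fun M => M i j) hval
    simp only [Matrix.map_apply] at this
    simp only [Matrix.sub_apply, map_sub]
    rcases eq_or_ne i j with rfl | hij
    · simp only [Matrix.one_apply_eq] at this ⊢
      rw [this]; simp
    · simp only [Matrix.one_apply_ne hij] at this ⊢
      rw [this]; simp
  choose Y hY using fun i j => (red_eq_zero_iff _).mp (hred i j)
  refine ⟨Matrix.of Y, ?_⟩
  apply Units.ext
  rw [kerUnit_val]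
  have : k.val - 1 = (p : ZMod (p^2)) • Matrix.of Y := by
    ext i j
    rw [Matrix.smul_apply, smul_eq_mul, Matrix.of_apply, ← hY i j]
  rw [← this]
  abel

lemma det_kerUnit (A : Matrix (Fin 2) (Fin 2) (ZMod (p^2))) :
    (kerUnit A).val.det = 1 + (p : ZMod (p^2)) * A.trace := by
  rw [kerUnit_val, Matrix.det_fin_two, Matrix.trace_fin_two]
  simp only [Matrix.add_apply, Matrix.smul_apply, Matrix.one_apply_eq, smul_eq_mul,
    Matrix.one_apply_ne (by decide : (0 : Fin 2) ≠ 1),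
    Matrix.one_apply_ne (by decide : (1 : Fin 2) ≠ 0), zero_add]
  linear_combination (A 0 0 * A 1 1 - A 0 1 * A 1 0) * pp_zero (p := p)

end B
section C
variable {p : ℕ} [Fact p.Prime]

omit [Fact p.Prime] in
lemma six_sum_sq (n : ℕ) : 6 * (∑ i ∈ Finset.range (n+1), i * i) = n * (n+1) * (2*n+1) := by
  induction n with
  | zero => simp
  | succ n ih =>
      rw [Finset.sum_range_succ, Nat.mul_add, ih]
      ring

lemma dvd_sum_id (hp3 : 3 < p) : p ∣ ∑ i ∈ Finset.range p, i := by
  have h2 : (∑ i ∈ Finset.range p, i) * 2 = p * (p - 1) := Finset.sum_range_id_mul_two p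
  have hpd : p ∣ (∑ i ∈ Finset.range p, i) * 2 := h2 ▸ Dvd.intro _ rfl
  have hp : p.Prime := Fact.out
  rcases (Nat.Prime.dvd_mul hp).mp hpd with h | h
  · exact h
  · exact absurd (Nat.le_of_dvd (by norm_num) h) (by omega)

lemma dvd_sum_sq (hp3 : 3 < p) : p ∣ ∑ i ∈ Finset.range p, i * i := by
  have hp : p.Prime := Fact.out
  have hnd : ¬ p ∣ 6 := fun hd => by
    have h1 := Nat.le_of_dvd (by norm_num) hd
    interval_cases p <;> revert hp hd <;> decide
  have hcop : p.Coprime 6 := hp.coprime_iff_not_dvd.mpr hnd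
  obtain ⟨n, rfl⟩ : ∃ n, p = n + 1 := ⟨p - 1, by omega⟩
  have hpd : (n+1) ∣ 6 * ∑ i ∈ Finset.range (n+1), i * i := by
    rw [six_sum_sq n]; exact ⟨n * (2*n+1), by ring⟩
  exact (Nat.Coprime.dvd_of_dvd_mul_left hcop hpd)

lemma dvd_sum_prod (hp3 : 3 < p) : p ∣ ∑ i ∈ Finset.range p, i * (p - 1 - i) := by
  have key : (∑ i ∈ Finset.range p, i * (p-1-i)) + ((∑ i ∈ Finset.range p, i * i)
      + (∑ i ∈ Finset.range p, i)) = p * ∑ i ∈ Finset.range p, i := by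
    rw [← Finset.sum_add_distrib, ← Finset.sum_add_distrib, Finset.mul_sum]
    apply Finset.sum_congr rfl
    intro i hi
    have hip : i < p := Finset.mem_range.mp hi
    have h : (p - 1 - i) + i + 1 = p := by omega
    calc i * (p-1-i) + (i*i + i) = i * ((p-1-i) + i + 1) := by ring
      _ = p * i := by rw [h]; ring
  have heq : (∑ i ∈ Finset.range p, i * (p-1-i)) =
      p * (∑ i ∈ Finset.range p, i) - (∑ i ∈ Finset.range p, i * i)
        - (∑ i ∈ Finset.range p, i) := by omega
  rw [heq]
  exact Nat.dvd_sub (Nat.dvd_sub (Dvd.intro _ rfl) (dvd_sum_sq hp3)) (dvd_sum_id hp3)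

end C
section D
variable {p : ℕ} [Fact p.Prime]

local notation "Mat" => Matrix (Fin 2) (Fin 2) (ZMod (p^2))

lemma aux0 (X : Mat) : (p : ℕ) • ((p : ZMod (p^2)) • X) = 0 := by
  rw [← Nat.cast_smul_eq_nsmul (ZMod (p^2)), smul_smul, pp_zero, zero_smul]

lemma aux1 {k : ℕ} (hk : p ∣ k) (X : Mat) : k • ((p : ZMod (p^2)) • X) = 0 := by
  obtain ⟨m, rfl⟩ := hk
  rw [mul_comm, mul_smul, aux0, smul_zero]

lemma pow_p_eq (hp3 : 3 < p) (N B : Mat) (hN : N * N = 0) :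
    (1 + N + (p : ZMod (p^2)) • B) ^ p = 1 + (p : ZMod (p^2)) • N := by
  set u : Mat := 1 + N with hu
  set j : Mat := (p : ZMod (p^2)) • B with hj
  have hjXj : ∀ X : Mat, j * X * j = 0 := by
    intro X
    rw [hj, smul_mul_assoc, smul_mul_assoc, mul_smul_comm, smul_smul, pp_zero, zero_smul]
  have hup : ∀ i : ℕ, u ^ i = 1 + i • N := by
    intro i
    induction i with
    | zero => simp
    | succ i ih =>
        have hps : u ^ (i+1) = u ^ i * u := pow_succ _ _
        rw [hps, ih, hu, mul_add, mul_one, add_mul, one_mul, smul_mul_assoc, hN, smul_zero,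
          add_zero, succ_nsmul]
        abel
  clear_value u j
  have key : ∀ n : ℕ, (u + j) ^ n = u ^ n + ∑ i ∈ Finset.range n, u ^ i * j * u ^ (n-1-i) := by
    intro n
    induction n with
    | zero => simp
    | succ n ih =>
        have hps : (u + j) ^ (n+1) = (u + j) ^ n * (u + j) := pow_succ _ _
        rw [hps, ih, add_mul, mul_add, mul_add, Finset.sum_mul, Finset.sum_mul]
        have e1 : ∑ i ∈ Finset.range n, u ^ i * j * u ^ (n-1-i) * j = 0 := by
          apply Finset.sum_eq_zero
          intro i _
          rw [mul_assoc, mul_assoc, ← mul_assoc j _ j, hjXj, mul_zero]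
        have e2 : ∀ i ∈ Finset.range n, u ^ i * j * u ^ (n-1-i) * u = u ^ i * j * u ^ (n-i) := by
          intro i hi
          have hin : i < n := Finset.mem_range.mp hi
          have : (n-1-i) + 1 = n - i := by omega
          rw [mul_assoc, ← pow_succ, this]
        rw [Finset.sum_congr rfl e2, e1, add_zero]
        have e3 : u ^ n * u = u ^ (n+1) := (pow_succ _ _).symm
        have e4 : ∑ i ∈ Finset.range (n+1), u ^ i * j * u ^ (n+1-1-i)
            = (∑ i ∈ Finset.range n, u ^ i * j * u ^ (n-i)) + u ^ n * j := by
          rw [Finset.sum_range_succ]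
          simp
        rw [e3, e4]
        abel
  have hterm : ∀ i ∈ Finset.range p, u ^ i * j * u ^ (p-1-i)
      = j + i • (N * j) + (p-1-i) • (j * N) + (i * (p-1-i)) • (N * j * N) := by
    intro i _
    rw [hup i, hup (p-1-i)]
    simp only [mul_add, add_mul, one_mul, mul_one, smul_mul_assoc, mul_smul_comm, smul_smul,
      smul_add]
    rw [Nat.mul_comm i (p-1-i)]
    abel
  have hsum : ∑ i ∈ Finset.range p, u ^ i * j * u ^ (p-1-i) = 0 := by
    rw [Finset.sum_congr rfl hterm]
    rw [Finset.sum_add_distrib, Finset.sum_add_distrib, Finset.sum_add_distrib]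
    rw [Finset.sum_const, Finset.card_range, ← Finset.sum_smul, ← Finset.sum_smul,
      ← Finset.sum_smul]
    have z1 : (p : ℕ) • j = 0 := by rw [hj]; exact aux0 B
    have z2 : (∑ i ∈ Finset.range p, i) • (N * j) = 0 := by
      rw [hj, mul_smul_comm]; exact aux1 (dvd_sum_id hp3) _
    have z3 : (∑ i ∈ Finset.range p, (p-1-i)) • (j * N) = 0 := by
      have : ∑ i ∈ Finset.range p, (p-1-i) = ∑ i ∈ Finset.range p, i :=
        Finset.sum_range_reflect (fun i => i) p
      rw [this, hj, smul_mul_assoc]; exact aux1 (dvd_sum_id hp3) _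
    have z4 : (∑ i ∈ Finset.range p, i * (p-1-i)) • (N * j * N) = 0 := by
      rw [hj, mul_smul_comm, smul_mul_assoc]; exact aux1 (dvd_sum_prod hp3) _
    rw [z1, z2, z3, z4]
    abel
  rw [key p, hsum, add_zero, hup p, Nat.cast_smul_eq_nsmul (ZMod (p^2)) p N]
end D
section E
variable {p : ℕ} [Fact p.Prime]

local notation "Mat" => Matrix (Fin 2) (Fin 2) (ZMod (p^2))

def mkGL {n : ℕ} (M : Matrix (Fin 2) (Fin 2) (ZMod n)) (h : M.det = 1) :
    GL (Fin 2) (ZMod n) :=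
  ⟨M, M.adjugate, by rw [Matrix.mul_adjugate, h, one_smul], by rw [Matrix.adjugate_mul, h, one_smul]⟩

lemma mkGL_val {n : ℕ} (M : Matrix (Fin 2) (Fin 2) (ZMod n)) (h : M.det = 1) :
    (mkGL M h).val = M := rfl

lemma unip_mem (hp3 : 3 < p) (H : Subgroup (GL2 (p^2)))
    (hSL : ∀ M : GL2 p, (↑M : Matrix (Fin 2) (Fin 2) (ZMod p)).det = 1 → M ∈ H.map (phi p))
    (N : Mat) (hNN : N * N = 0)
    (hdet : ((1 : Matrix (Fin 2) (Fin 2) (ZMod p)) + N.map (red p)).det = 1) :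
    kerUnit N ∈ H := by
  obtain ⟨g, hgH, hg⟩ := hSL (mkGL _ hdet) hdet
  have hval : g.val.map (red p) = 1 + N.map (red p) := by
    have := congrArg Units.val hg
    rw [phi_val] at this
    exact this
  have hred : ∀ i j, red p ((g.val - 1 - N) i j) = 0 := by
    intro i j
    have hD : (g.val - 1 - N).map (red p) = 0 := by
      rw [Matrix.map_sub _ (map_sub (red p)), Matrix.map_sub _ (map_sub (red p)), hval, Matrix.map_one _ (map_zero _) (map_one _)]
      abel
    have := congrArg (fun M => M i j) hD
    simpa [Matrix.map_apply] using this
  choose Y hY using fun i j => (red_eq_zero_iff _).mp (hred i j)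
  have hgval : g.val = 1 + N + (p : ZMod (p^2)) • Matrix.of Y := by
    have : g.val - 1 - N = (p : ZMod (p^2)) • Matrix.of Y := by
      ext i j
      rw [Matrix.smul_apply, Matrix.of_apply, smul_eq_mul, ← hY i j]
    rw [← this]
    abel
  have hpow : g ^ p = kerUnit N := by
    apply Units.ext
    rw [Units.val_pow_eq_pow_val, hgval, pow_p_eq hp3 N (Matrix.of Y) hNN, kerUnit_val]
  exact hpow ▸ pow_mem hgH p

lemma sl2_mem (hp3 : 3 < p) (H : Subgroup (GL2 (p^2)))
    (hSL : ∀ M : GL2 p, (↑M : Matrix (Fin 2) (Fin 2) (ZMod p)).det = 1 → M ∈ H.map (phi p))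
    (A : Mat) (hA : red p A.trace = 0) : kerUnit A ∈ H := by
  set E12 : Mat := !![0,1;0,0] with hE12
  set E21 : Mat := !![0,0;1,0] with hE21
  set W : Mat := !![1,1;-1,-1] with hW
  have memE12 : kerUnit E12 ∈ H := by
    apply unip_mem hp3 H hSL
    · ext i j; fin_cases i <;> fin_cases j <;>
        simp [hE12, Matrix.mul_apply, Fin.sum_univ_succ]
    · simp [hE12, Matrix.det_fin_two, Matrix.add_apply, Matrix.one_apply, Matrix.map_apply]
  have memE21 : kerUnit E21 ∈ H := by
    apply unip_mem hp3 H hSL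
    · ext i j; fin_cases i <;> fin_cases j <;>
        simp [hE21, Matrix.mul_apply, Fin.sum_univ_succ]
    · simp [hE21, Matrix.det_fin_two, Matrix.add_apply, Matrix.one_apply, Matrix.map_apply]
  have memW : kerUnit W ∈ H := by
    apply unip_mem hp3 H hSL
    · ext i j; fin_cases i <;> fin_cases j <;>
        simp [hW, Matrix.mul_apply, Fin.sum_univ_succ]
    · simp [hW, Matrix.det_fin_two, Matrix.add_apply, Matrix.one_apply, Matrix.map_apply]
  have hadd : ∀ X Y : Mat, kerUnit X ∈ H → kerUnit Y ∈ H → kerUnit (X + Y) ∈ H := by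
    intro X Y hX hY
    rw [← kerUnit_mul]
    exact mul_mem hX hY
  set x := A 0 0
  set y := A 0 1
  set z := A 1 0
  set w := A 1 1
  have hA' : kerUnit (x • W + ((y - x) • E12 + (z + x) • E21)) ∈ H :=
    hadd _ _ (kerUnit_smul_mem memW x)
      (hadd _ _ (kerUnit_smul_mem memE12 (y - x)) (kerUnit_smul_mem memE21 (z + x)))
  have hpxw : (p : ZMod (p^2)) * (x + w) = 0 := by
    apply (pmul_eq_zero_iff _).mpr
    rwa [Matrix.trace_fin_two] at hA
  have heq : kerUnit A = kerUnit (x • W + ((y - x) • E12 + (z + x) • E21)) := by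
    apply kerUnit_ext
    ext i j
    fin_cases i <;> fin_cases j <;>
      (try simp [hE12, hE21, hW, Matrix.smul_apply, Matrix.add_apply]) <;>
      (try ring) <;>
      (try linear_combination hpxw) <;>
      (try linear_combination -hpxw)
  rw [heq]
  exact hA'

end E
section F
variable {p : ℕ} [Fact p.Prime]

local notation "Mat" => Matrix (Fin 2) (Fin 2) (ZMod (p^2))

lemma kerUnit_inv (A : Mat) : (kerUnit A)⁻¹ = kerUnit (-A) := by
  apply inv_eq_of_mul_eq_one_right
  rw [kerUnit_mul, add_neg_cancel, kerUnit_zero]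

omit [Fact p.Prime] in
lemma det_val_inv {n : ℕ} (u : GL (Fin 2) (ZMod n)) :
    (u.val).det * ((u⁻¹).val).det = 1 := by
  rw [← Matrix.det_mul, ← Units.val_mul, mul_inv_cancel, Units.val_one, Matrix.det_one]

omit [Fact p.Prime] in
lemma det_val_conj {n : ℕ} (c g : GL (Fin 2) (ZMod n)) :
    ((c * g * c⁻¹).val).det = (g.val).det := by
  rw [Units.val_mul, Units.val_mul, Matrix.det_mul, Matrix.det_mul]
  have := det_val_inv c
  calc (c.val).det * (g.val).det * ((c⁻¹).val).det
      = ((c.val).det * ((c⁻¹).val).det) * (g.val).det := by ring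
    _ = (g.val).det := by rw [this, one_mul]

omit [Fact p.Prime] in
lemma det_val_commutator {n : ℕ} (a b : GL (Fin 2) (ZMod n)) :
    ((a * b * a⁻¹ * b⁻¹).val).det = 1 := by
  rw [Units.val_mul, Units.val_mul, Units.val_mul, Matrix.det_mul, Matrix.det_mul,
    Matrix.det_mul]
  have ha := det_val_inv a
  have hb := det_val_inv b
  calc (a.val).det * (b.val).det * ((a⁻¹).val).det * ((b⁻¹).val).det
      = ((a.val).det * ((a⁻¹).val).det) * ((b.val).det * ((b⁻¹).val).det) := by ring
    _ = 1 := by rw [ha, hb, one_mul]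

lemma zmodp_two_ne_zero (hp3 : 3 < p) : (2 : ZMod p) ≠ 0 := by
  intro h
  rw [show (2 : ZMod p) = ((2 : ℕ) : ZMod p) by norm_num,
    ZMod.natCast_eq_zero_iff] at h
  have := Nat.le_of_dvd (by norm_num) h
  omega

lemma zmodp_three_ne_zero (hp3 : 3 < p) : (3 : ZMod p) ≠ 0 := by
  intro h
  rw [show (3 : ZMod p) = ((3 : ℕ) : ZMod p) by norm_num,
    ZMod.natCast_eq_zero_iff] at h
  have := Nat.le_of_dvd (by norm_num) h
  omega

/-- Upper transvection as a unit. -/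
def Tu {n : ℕ} (c : ZMod n) : GL (Fin 2) (ZMod n) where
  val := !![1, c; 0, 1]
  inv := !![1, -c; 0, 1]
  val_inv := by
    ext i j
    fin_cases i <;> fin_cases j <;> simp [Matrix.mul_apply, Fin.sum_univ_succ]
  inv_val := by
    ext i j
    fin_cases i <;> fin_cases j <;> simp [Matrix.mul_apply, Fin.sum_univ_succ]

/-- Lower transvection as a unit. -/
def Tl {n : ℕ} (c : ZMod n) : GL (Fin 2) (ZMod n) where
  val := !![1, 0; c, 1]
  inv := !![1, 0; -c, 1]
  val_inv := by
    ext i j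
    fin_cases i <;> fin_cases j <;> simp [Matrix.mul_apply, Fin.sum_univ_succ]
  inv_val := by
    ext i j
    fin_cases i <;> fin_cases j <;> simp [Matrix.mul_apply, Fin.sum_univ_succ]

omit [Fact p.Prime] in
lemma Tu_val {n : ℕ} (c : ZMod n) : (Tu c).val = !![1, c; 0, 1] := rfl
omit [Fact p.Prime] in
lemma Tl_val {n : ℕ} (c : ZMod n) : (Tl c).val = !![1, 0; c, 1] := rfl

omit [Fact p.Prime] in
lemma Tu_inv {n : ℕ} (c : ZMod n) : (Tu c)⁻¹ = Tu (-c) := Units.ext rfl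
omit [Fact p.Prime] in
lemma Tl_inv {n : ℕ} (c : ZMod n) : (Tl c)⁻¹ = Tl (-c) := Units.ext rfl

omit [Fact p.Prime] in
lemma Tu_mul {n : ℕ} (a b : ZMod n) : Tu a * Tu b = Tu (a + b) := by
  apply Units.ext
  show (Tu a).val * (Tu b).val = (Tu (a+b)).val
  rw [Tu_val, Tu_val, Tu_val]
  ext i j
  fin_cases i <;> fin_cases j <;> simp [Matrix.mul_apply, Fin.sum_univ_succ] <;> ring

omit [Fact p.Prime] in
lemma Tl_mul {n : ℕ} (a b : ZMod n) : Tl a * Tl b = Tl (a + b) := by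
  apply Units.ext
  show (Tl a).val * (Tl b).val = (Tl (a+b)).val
  rw [Tl_val, Tl_val, Tl_val]
  ext i j
  fin_cases i <;> fin_cases j <;> simp [Matrix.mul_apply, Fin.sum_univ_succ] <;> ring

omit [Fact p.Prime] in
lemma Tu_zero {n : ℕ} : Tu (0 : ZMod n) = 1 := by
  apply Units.ext
  show !![1, (0 : ZMod n); 0, 1] = 1
  rw [Matrix.one_fin_two]

omit [Fact p.Prime] in
lemma Tl_zero {n : ℕ} : Tl (0 : ZMod n) = 1 := by
  apply Units.ext
  show !![1, 0; (0 : ZMod n), 1] = 1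
  rw [Matrix.one_fin_two]

omit [Fact p.Prime] in
lemma Tu_det {n : ℕ} (c : ZMod n) : ((Tu c).val).det = 1 := by
  rw [Tu_val, Matrix.det_fin_two]
  simp

omit [Fact p.Prime] in
lemma Tl_det {n : ℕ} (c : ZMod n) : ((Tl c).val).det = 1 := by
  rw [Tl_val, Matrix.det_fin_two]
  simp

end F
section G
variable {p : ℕ} [Fact p.Prime]

/-- diagonal matrix as a unit. -/
def Dg {n : ℕ} (a b : ZMod n) (hab : a * b = 1) : GL (Fin 2) (ZMod n) where
  val := !![a, 0; 0, b]
  inv := !![b, 0; 0, a]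
  val_inv := by
    have hab' : b * a = 1 := by rw [mul_comm]; exact hab
    ext i j
    fin_cases i <;> fin_cases j <;>
      simp [Matrix.mul_apply, Fin.sum_univ_succ, hab, hab']
  inv_val := by
    have hab' : b * a = 1 := by rw [mul_comm]; exact hab
    ext i j
    fin_cases i <;> fin_cases j <;>
      simp [Matrix.mul_apply, Fin.sum_univ_succ, hab, hab']

omit [Fact p.Prime] in
lemma Dg_det {n : ℕ} (a b : ZMod n) (hab : a * b = 1) : ((Dg a b hab).val).det = 1 := by
  show (!![a, 0; 0, b]).det = 1
  rw [Matrix.det_fin_two]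
  simp [hab]

lemma Tu_eq_comm (hp3 : 3 < p) (c : ZMod p) :
    Tu c = Dg 2 (2:ZMod p)⁻¹ (mul_inv_cancel₀ (zmodp_two_ne_zero hp3)) * Tu ((3:ZMod p)⁻¹ * c)
      * (Dg 2 (2:ZMod p)⁻¹ (mul_inv_cancel₀ (zmodp_two_ne_zero hp3)))⁻¹
      * (Tu ((3:ZMod p)⁻¹ * c))⁻¹ := by
  have h2 : (2 : ZMod p) * (2:ZMod p)⁻¹ = 1 := mul_inv_cancel₀ (zmodp_two_ne_zero hp3)
  have h3 : (3 : ZMod p) * (3:ZMod p)⁻¹ = 1 := mul_inv_cancel₀ (zmodp_three_ne_zero hp3)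
  apply Units.ext
  show !![1, c; 0, 1] = !![2, 0; 0, (2:ZMod p)⁻¹] * !![1, (3:ZMod p)⁻¹ * c; 0, 1]
      * !![(2:ZMod p)⁻¹, 0; 0, 2] * !![1, -((3:ZMod p)⁻¹ * c); 0, 1]
  ext i j
  fin_cases i <;> fin_cases j <;>
    simp [Matrix.mul_apply, Fin.sum_univ_succ] <;>
    first
      | rfl
      | linear_combination -h2
      | linear_combination (3:ZMod p)⁻¹ * c * h2 - c * h3

lemma Tl_eq_comm (hp3 : 3 < p) (c : ZMod p) :
    Tl c = Dg (2:ZMod p)⁻¹ 2 (inv_mul_cancel₀ (zmodp_two_ne_zero hp3)) * Tl ((3:ZMod p)⁻¹ * c)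
      * (Dg (2:ZMod p)⁻¹ 2 (inv_mul_cancel₀ (zmodp_two_ne_zero hp3)))⁻¹
      * (Tl ((3:ZMod p)⁻¹ * c))⁻¹ := by
  have h2 : (2 : ZMod p) * (2:ZMod p)⁻¹ = 1 := mul_inv_cancel₀ (zmodp_two_ne_zero hp3)
  have h3 : (3 : ZMod p) * (3:ZMod p)⁻¹ = 1 := mul_inv_cancel₀ (zmodp_three_ne_zero hp3)
  apply Units.ext
  show !![1, 0; c, 1] = !![(2:ZMod p)⁻¹, 0; 0, 2] * !![1, 0; (3:ZMod p)⁻¹ * c, 1]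
      * !![2, 0; 0, (2:ZMod p)⁻¹] * !![1, 0; -((3:ZMod p)⁻¹ * c), 1]
  ext i j
  fin_cases i <;> fin_cases j <;>
    simp [Matrix.mul_apply, Fin.sum_univ_succ] <;>
    first
      | rfl
      | linear_combination -h2
      | linear_combination (3:ZMod p)⁻¹ * c * h2 - c * h3

lemma decomp (σ : GL (Fin 2) (ZMod p)) (hdet : (σ.val).det = 1) (hc : σ.val 1 0 ≠ 0) :
    σ = Tu ((σ.val 0 0 - 1) * (σ.val 1 0)⁻¹) * Tl (σ.val 1 0)
      * Tu ((σ.val 1 1 - 1) * (σ.val 1 0)⁻¹) := by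
  have hdet2 : σ.val 0 0 * σ.val 1 1 - σ.val 0 1 * σ.val 1 0 = 1 := by
    rw [← Matrix.det_fin_two]; exact hdet
  apply Units.ext
  show σ.val = _
  rw [Matrix.eta_fin_two σ.val]
  show _ = !![1, (σ.val 0 0 - 1) * (σ.val 1 0)⁻¹; 0, 1] * !![1, 0; σ.val 1 0, 1]
      * !![1, (σ.val 1 1 - 1) * (σ.val 1 0)⁻¹; 0, 1]
  ext i j
  fin_cases i <;> fin_cases j <;>
    simp [Matrix.mul_apply, Fin.sum_univ_succ] <;>
    field_simp <;>
    (try linear_combination hdet2) <;>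
    (try linear_combination -hdet2) <;>
    (try ring)

end G
section H
variable {p : ℕ} [Fact p.Prime]

local notation "Mat" => Matrix (Fin 2) (Fin 2) (ZMod (p^2))

lemma scalar_part (hp3 : 3 < p) (A : Mat) :
    ∃ (c : ZMod (p^2)) (A₀ : Mat), A = A₀ + c • 1 ∧ red p A₀.trace = 0 ∧
      (2 : ZMod p) * red p c = red p A.trace := by
  set c : ZMod (p^2) := ((((2:ZMod p)⁻¹ * red p A.trace).val : ℕ) : ZMod (p^2)) with hc
  have hredc : red p c = (2:ZMod p)⁻¹ * red p A.trace := by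
    rw [hc, red_natCast, ZMod.natCast_zmod_val]
  have h2 : (2 : ZMod p) ≠ 0 := zmodp_two_ne_zero hp3
  have htr2 : (2:ZMod p) * red p c = red p A.trace := by
    rw [hredc, ← mul_assoc, mul_inv_cancel₀ h2, one_mul]
  refine ⟨c, A - c • 1, by abel, ?_, htr2⟩
  have htrace : (A - c • (1:Mat)).trace = A.trace - c * 2 := by
    rw [Matrix.trace_sub, Matrix.trace_smul, Matrix.trace_one]
    simp [smul_eq_mul]
  rw [htrace, map_sub, _root_.map_mul]
  have h22 : red p (2 : ZMod (p^2)) = (2 : ZMod p) := by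
    rw [show ((2 : ZMod (p^2)) = ((2:ℕ) : ZMod (p^2))) by norm_num, red_natCast]
    norm_num
  rw [h22, ← htr2]
  ring

lemma scalar_pow {H : Subgroup (GL2 (p^2))} {c : ZMod (p^2)} (hc : red p c ≠ 0)
    (h : kerUnit (c • (1:Mat)) ∈ H) : kerUnit (1:Mat) ∈ H := by
  set n := (((red p c)⁻¹).val : ℕ) with hn
  have hpow := pow_mem h n
  rw [kerUnit_pow, smul_smul] at hpow
  have heq : kerUnit (((n : ZMod (p^2)) * c) • (1:Mat)) = kerUnit (1:Mat) := by
    apply kerUnit_ext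
    have hred : red p ((n : ZMod (p^2)) * c) = red p 1 := by
      rw [_root_.map_mul, red_natCast, hn, ZMod.natCast_zmod_val, inv_mul_cancel₀ hc, _root_.map_one]
    ext i j
    rcases eq_or_ne i j with rfl | hij
    · simp only [Matrix.smul_apply, Matrix.one_apply_eq, smul_eq_mul, mul_one]
      have hh := pmul_congr (x := (n : ZMod (p^2)) * c) (y := 1) (by rw [hred])
      simpa using hh
    · simp [Matrix.one_apply_ne hij]
  rwa [heq] at hpow

lemma scalar_of {H : Subgroup (GL2 (p^2))} (hp3 : 3 < p)
    (sl2 : ∀ A : Mat, red p A.trace = 0 → kerUnit A ∈ H)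
    (A : Mat) (hA : kerUnit A ∈ H) (ht : red p A.trace ≠ 0) : kerUnit (1:Mat) ∈ H := by
  obtain ⟨c, A₀, hdec, htr0, htr2⟩ := scalar_part hp3 A
  have hA₀ : kerUnit A₀ ∈ H := sl2 A₀ htr0
  have hcmem : kerUnit (c • (1:Mat)) ∈ H := by
    have : kerUnit A = kerUnit A₀ * kerUnit (c • (1:Mat)) := by
      rw [kerUnit_mul, ← hdec]
    have h2 := mul_mem (inv_mem hA₀) (this ▸ hA)
    rwa [← mul_assoc, inv_mul_cancel, one_mul] at h2
  apply scalar_pow (c := c) ?_ hcmem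
  intro h0
  rw [← htr2, h0, mul_zero] at ht
  exact ht rfl

end H


section I
variable {p : ℕ} [Fact p.Prime]

local notation "Mat" => Matrix (Fin 2) (Fin 2) (ZMod (p^2))

lemma le_of_lc (hp3 : 3 < p) (H₁ H₂ : Subgroup (GL2 (p^2)))
    (f : ↥H₁ ≃ ↥H₂) (hf : ∀ h : ↥H₁, IsConj (h : GL2 (p^2)) ((f h : GL2 (p^2))))
    (hSL₁ : ∀ M : GL2 p,
      (↑M : Matrix (Fin 2) (Fin 2) (ZMod p)).det = 1 → M ∈ H₁.map (phi p))
    (hSL₂ : ∀ M : GL2 p,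
      (↑M : Matrix (Fin 2) (Fin 2) (ZMod p)).det = 1 → M ∈ H₂.map (phi p)) :
    H₁ ≤ H₂ := by
  have sl2₁ : ∀ A : Mat, red p A.trace = 0 → kerUnit A ∈ H₁ :=
    fun A hA => sl2_mem hp3 H₁ hSL₁ A hA
  have sl2₂ : ∀ A : Mat, red p A.trace = 0 → kerUnit A ∈ H₂ :=
    fun A hA => sl2_mem hp3 H₂ hSL₂ A hA
  have central_conj : ∀ (c : ZMod (p^2)) (u : GL2 (p^2)),
      u * (kerUnit (c • (1:Mat))) * u⁻¹ = kerUnit (c • (1:Mat)) := by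
    intro c u
    rw [kerUnit_central c u, mul_assoc, mul_inv_cancel, mul_one]
  have trans12 : ∀ c : ZMod (p^2), kerUnit (c • (1:Mat)) ∈ H₁ →
      kerUnit (c • (1:Mat)) ∈ H₂ := by
    intro c hc
    obtain ⟨u, hu⟩ := isConj_iff.mp (hf ⟨_, hc⟩)
    have heq : ((f ⟨_, hc⟩ : ↥H₂) : GL2 (p^2)) = kerUnit (c • (1:Mat)) := by
      rw [← hu]; exact central_conj c u
    rw [← heq]; exact (f ⟨_, hc⟩).2
  have trans21 : ∀ c : ZMod (p^2), kerUnit (c • (1:Mat)) ∈ H₂ →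
      kerUnit (c • (1:Mat)) ∈ H₁ := by
    intro c hc
    obtain ⟨u, hu⟩ := isConj_iff.mp (hf (f.symm ⟨_, hc⟩))
    have hx : ((f (f.symm ⟨_, hc⟩) : ↥H₂) : GL2 (p^2)) = kerUnit (c • (1:Mat)) := by
      rw [Equiv.apply_symm_apply]
    have heq : ((f.symm ⟨_, hc⟩ : ↥H₁) : GL2 (p^2)) = kerUnit (c • (1:Mat)) := by
      have h2 : ((f.symm ⟨_, hc⟩ : ↥H₁) : GL2 (p^2))
          = u⁻¹ * (((f (f.symm ⟨_, hc⟩)) : ↥H₂) : GL2 (p^2)) * u := by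
        rw [← hu]; group
      rw [hx] at h2
      have h3 := central_conj c u⁻¹
      rw [inv_inv] at h3
      rw [h2, h3]
    rw [← heq]; exact (f.symm ⟨_, hc⟩).2
  intro g hg
  obtain ⟨u, hu⟩ := isConj_iff.mp (hf ⟨g, hg⟩)
  have hcoe : ((⟨g, hg⟩ : ↥H₁) : GL2 (p^2)) = g := rfl
  rw [hcoe] at hu
  have hg₂H : ((f ⟨g,hg⟩ : ↥H₂) : GL2 (p^2)) ∈ H₂ := (f ⟨g,hg⟩).2
  set g₂ : GL2 (p^2) := ((f ⟨g, hg⟩ : ↥H₂) : GL2 (p^2)) with hg₂def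
  have hdet₂ : (g₂.val).det = (g.val).det := by rw [← hu]; exact det_val_conj u g
  have hphig₂ : phi p g₂ = phi p u * phi p g * (phi p u)⁻¹ := by
    rw [← hu, _root_.map_mul, _root_.map_mul, map_inv]
  set s : GL2 p := phi p u * phi p g * (phi p u)⁻¹ * (phi p g)⁻¹ with hs
  have hsdet : (s.val).det = 1 := det_val_commutator _ _
  obtain ⟨g₃, hg₃H, hg₃⟩ := hSL₂ s hsdet
  have hh'H : g₃⁻¹ * g₂ ∈ H₂ := mul_mem (inv_mem hg₃H) hg₂H
  set h' : GL2 (p^2) := g₃⁻¹ * g₂ with hh'def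
  have hphi : phi p h' = phi p g := by
    rw [hh'def, _root_.map_mul, map_inv, hg₃, hphig₂, hs]; group
  have hk : phi p (g * h'⁻¹) = 1 := by rw [_root_.map_mul, map_inv, hphi, mul_inv_cancel]
  obtain ⟨A, hA⟩ := eq_kerUnit_of_phi_eq_one hk
  have hgdec : g = kerUnit A * h' := by rw [← hA]; group
  suffices hker : kerUnit A ∈ H₂ by rw [hgdec]; exact mul_mem hker hh'H
  by_cases hcent : kerUnit (1 : Mat) ∈ H₁
  · obtain ⟨c, A₀, hdecA, htr0, _⟩ := scalar_part hp3 A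
    have h1 : kerUnit (1:Mat) ∈ H₂ := by
      have := trans12 1 (by rwa [one_smul])
      rwa [one_smul] at this
    have hc : kerUnit (c • (1:Mat)) ∈ H₂ := kerUnit_smul_mem h1 c
    rw [hdecA, ← kerUnit_mul]
    exact mul_mem (sl2₂ A₀ htr0) hc
  · have hcent₂ : kerUnit (1 : Mat) ∉ H₂ := fun hc => hcent (by
      have := trans21 1 (by rwa [one_smul]); rwa [one_smul] at this)
    have P₂ : ∀ a b : GL2 (p^2), a ∈ H₂ → b ∈ H₂ → phi p a = phi p b →
        (a.val).det = (b.val).det := by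
      intro a b ha hb hab
      have hphik : phi p (a * b⁻¹) = 1 := by rw [_root_.map_mul, map_inv, hab, mul_inv_cancel]
      obtain ⟨C, hC⟩ := eq_kerUnit_of_phi_eq_one hphik
      have hmem : kerUnit C ∈ H₂ := hC ▸ mul_mem ha (inv_mem hb)
      have htr : red p C.trace = 0 := by
        by_contra ht
        exact hcent₂ (scalar_of hp3 sl2₂ C hmem ht)
      have hab' : a = kerUnit C * b := by rw [← hC]; group
      rw [hab', Units.val_mul, Matrix.det_mul, det_kerUnit,
        (pmul_eq_zero_iff _).mpr htr, add_zero, one_mul]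
    set Gd : GL2 p → Prop :=
      fun σ => ∀ a : GL2 (p^2), a ∈ H₂ → phi p a = σ → (a.val).det = 1 with hGd
    have hGdmul : ∀ σ τ : GL2 p, (σ.val).det = 1 → (τ.val).det = 1 → Gd σ → Gd τ →
        Gd (σ * τ) := by
      intro σ τ hσ hτ h1 h2 a ha hya
      obtain ⟨aσ, haσ, hσφ⟩ := hSL₂ σ hσ
      obtain ⟨aτ, haτ, hτφ⟩ := hSL₂ τ hτ
      have hφ : phi p (aσ * aτ) = phi p a := by rw [_root_.map_mul, hσφ, hτφ, hya]
      rw [P₂ a (aσ*aτ) ha (mul_mem haσ haτ) hφ.symm, Units.val_mul, Matrix.det_mul,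
        h1 aσ haσ hσφ, h2 aτ haτ hτφ, one_mul]
    have hGdcomm : ∀ σ τ : GL2 p, (σ.val).det = 1 → (τ.val).det = 1 →
        Gd (σ * τ * σ⁻¹ * τ⁻¹) := by
      intro σ τ hσ hτ a ha hya
      obtain ⟨aσ, haσ, hσφ⟩ := hSL₂ σ hσ
      obtain ⟨aτ, haτ, hτφ⟩ := hSL₂ τ hτ
      have hφ : phi p (aσ * aτ * aσ⁻¹ * aτ⁻¹) = phi p a := by
        rw [_root_.map_mul, _root_.map_mul, _root_.map_mul, map_inv, map_inv, hσφ, hτφ, hya]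
      rw [P₂ a _ ha
        (mul_mem (mul_mem (mul_mem haσ haτ) (inv_mem haσ)) (inv_mem haτ)) hφ.symm]
      exact det_val_commutator aσ aτ
    have hGdTu : ∀ c : ZMod p, Gd (Tu c) := by
      intro c
      rw [Tu_eq_comm hp3 c]
      exact hGdcomm _ _ (Dg_det _ _ _) (Tu_det _)
    have hGdTl : ∀ c : ZMod p, Gd (Tl c) := by
      intro c
      rw [Tl_eq_comm hp3 c]
      exact hGdcomm _ _ (Dg_det _ _ _) (Tl_det _)
    have hGdc : ∀ σ : GL2 p, (σ.val).det = 1 → σ.val 1 0 ≠ 0 → Gd σ := by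
      intro σ hσ hc
      rw [decomp σ hσ hc]
      apply hGdmul
      · rw [Units.val_mul, Matrix.det_mul, Tu_det, Tl_det, one_mul]
      · exact Tu_det _
      · exact hGdmul _ _ (Tu_det _) (Tl_det _) (hGdTu _) (hGdTl _)
      · exact hGdTu _
    have hGdall : ∀ σ : GL2 p, (σ.val).det = 1 → Gd σ := by
      intro σ hσ
      by_cases hc : σ.val 1 0 = 0
      · have hd : σ.val 0 0 * σ.val 1 1 - σ.val 0 1 * σ.val 1 0 = 1 := by
          rw [← Matrix.det_fin_two]; exact hσ
        have h11 : σ.val 1 1 ≠ 0 := by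
          intro h0
          rw [hc, h0] at hd; simp at hd
        have hτdet : ((σ * Tl 1).val).det = 1 := by
          rw [Units.val_mul, Matrix.det_mul, hσ, Tl_det, one_mul]
        have hτc : (σ * Tl 1).val 1 0 ≠ 0 := by
          have he : (σ * Tl 1).val 1 0 = σ.val 1 0 + σ.val 1 1 := by
            rw [Units.val_mul, Tl_val]
            simp [Matrix.mul_apply, Fin.sum_univ_succ]
          rw [he, hc, zero_add]; exact h11
        have hστ : σ = (σ * Tl 1) * Tl (-1) := by
          rw [mul_assoc, Tl_mul]
          norm_num [Tl_zero]
        rw [hστ]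
        exact hGdmul _ _ hτdet (Tl_det _) (hGdc _ hτdet hτc) (hGdTl _)
      · exact hGdc σ hσ hc
    have hdet₃ : (g₃.val).det = 1 := hGdall s hsdet g₃ hg₃H hg₃
    have hdeth' : (h'.val).det = (g.val).det := by
      rw [hh'def, Units.val_mul, Matrix.det_mul]
      have hinv : ((g₃⁻¹).val).det = 1 := by
        have := det_val_inv g₃; rwa [hdet₃, one_mul] at this
      rw [hinv, one_mul, hdet₂]
    have hdetg : (g.val).det = (kerUnit A).val.det * (h'.val).det := by
      rw [hgdec, Units.val_mul, Matrix.det_mul]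
    rw [det_kerUnit, hdeth'] at hdetg
    have hunit : IsUnit ((g.val).det) := IsUnit.of_mul_eq_one _ (det_val_inv g)
    have hzero : (p : ZMod (p^2)) * A.trace = 0 := by
      have h0 : ((p : ZMod (p^2)) * A.trace) * (g.val).det = 0 := by
        linear_combination -hdetg
      exact (hunit.mul_left_eq_zero).mp h0
    exact sl2₂ A ((pmul_eq_zero_iff _).mp hzero)

end I


/-- Let `p > 3` be prime. Locally conjugate subgroups of
`GL₂(ℤ/p²ℤ)` whose images under `φ` both contain all determinant-`1` elements of
`GL₂(ℤ/pℤ)` are equal. -/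
theorem eq_of_locallyConjugate_SL_le {p : ℕ} [Fact p.Prime] (hp3 : 3 < p)
    (H₁ H₂ : Subgroup (GL2 (p^2)))
    (h : IsLocallyConjugate H₁ H₂)
    (hSL₁ : ∀ M : GL2 p,
      (↑M : Matrix (Fin 2) (Fin 2) (ZMod p)).det = 1 → M ∈ H₁.map (phi p))
    (hSL₂ : ∀ M : GL2 p,
      (↑M : Matrix (Fin 2) (Fin 2) (ZMod p)).det = 1 → M ∈ H₂.map (phi p)) :
    H₁ = H₂ := by
  obtain ⟨f, hf⟩ := h
  have hf' : ∀ k : ↥H₂, IsConj (k : GL2 (p^2)) ((f.symm k : GL2 (p^2))) := by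
    intro k
    have := hf (f.symm k)
    rw [Equiv.apply_symm_apply] at this
    exact this.symm
  exact le_antisymm (le_of_lc hp3 H₁ H₂ f hf hSL₁ hSL₂)
    (le_of_lc hp3 H₂ H₁ f.symm hf' hSL₂ hSL₁)
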